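/- Partition an n-element vertex set V into Y of size floor(n/2) and Z of size ceil(n/2). Let R be the set of all configurations with exactly one state-1 vertex in Y and exactly one state-1 vertex in Z (so |R| = floor(n/2)·ceil(n/2) = floor(n²/4)). Define g_1(C) to keep the Y-states of C and zero out Z, and g_2(C) to be the all-zero configuration. Then for every subset R' ⊆ R there is a threshold SyDS S on V (namely, with bipartite graph between Y and Z containing edge (y,z) iff some configuration of R' has y and z both in state 1, threshold 2 for every vertex of Y and threshold 3 for every vertex of Z) such that S(C) = g_1(C) for all C ∈ R' and S(C) = g_2(C) for all C ∈ R \ R'. -/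

import Mathlib

open scoped Classical

/-- Successor function of a threshold SyDS: vertex v becomes 1 iff the number of state-1
vertices in its closed neighborhood is at least τ v. -/
noncomputable def succF (n : ℕ) (G : SimpleGraph (Fin n)) (τ : Fin n → ℕ)
    (C : Fin n → Bool) : Fin n → Bool :=
  fun v => decide (τ v ≤ (Finset.univ.filter fun u => (u = v ∨ G.Adj v u) ∧ C u = true).card)

lemma filter_card_one {n : ℕ} (s : Finset (Fin n)) (C : Fin n → Bool)
    (h : (s.filter fun u => C u = true).card = 1) :
    ∃ a ∈ s, C a = true ∧ ∀ b ∈ s, C b = true → b = a := by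
  obtain ⟨a, ha⟩ := Finset.card_eq_one.mp h
  have haf : a ∈ s.filter fun u => C u = true := by
    rw [ha]; exact Finset.mem_singleton_self a
  rw [Finset.mem_filter] at haf
  refine ⟨a, haf.1, haf.2, fun b hb hCb => ?_⟩
  have hb' : b ∈ s.filter fun u => C u = true := Finset.mem_filter.mpr ⟨hb, hCb⟩
  rw [ha, Finset.mem_singleton] at hb'
  exact hb'

lemma config_struct {n : ℕ} (Y : Finset (Fin n)) (C : Fin n → Bool)
    (h1 : (Y.filter fun u => C u = true).card = 1)
    (h2 : (Yᶜ.filter fun u => C u = true).card = 1) :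
    ∃ y z, y ∈ Y ∧ z ∉ Y ∧ (∀ u, C u = true ↔ (u = y ∨ u = z)) := by
  obtain ⟨y, hy, hCy, hyu⟩ := filter_card_one Y C h1
  obtain ⟨z, hz, hCz, hzu⟩ := filter_card_one Yᶜ C h2
  rw [Finset.mem_compl] at hz
  refine ⟨y, z, hy, hz, fun u => ⟨fun hu => ?_, fun hu => ?_⟩⟩
  · by_cases huY : u ∈ Y
    · exact Or.inl (hyu u huY hu)
    · exact Or.inr (hzu u (Finset.mem_compl.mpr huY) hu)
  · rcases hu with rfl | rfl
    · exact hCy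
    · exact hCz

/-- The shattering construction: for every subset R' of the set R of configurations with
exactly one state-1 vertex in Y and one in Z = Yᶜ, the threshold SyDS with the bipartite
graph joining y,z iff some C ∈ R' has both in state 1, threshold 2 on Y and 3 on Z, maps
each C ∈ R' to g₁(C) (keep Y-states, zero out Z) and each C ∈ R \ R' to g₂(C) = 0. -/
theorem stmt15 (n : ℕ) (Y : Finset (Fin n)) (hY : Y.card = n / 2)
    (R' : Set (Fin n → Bool))
    (hR' : R' ⊆ {C | (Y.filter fun u => C u = true).card = 1 ∧
                     (Yᶜ.filter fun u => C u = true).card = 1}) :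
    letI G : SimpleGraph (Fin n) := SimpleGraph.fromRel fun y z =>
      ((y ∈ Y ∧ z ∉ Y) ∨ (z ∈ Y ∧ y ∉ Y)) ∧ ∃ C ∈ R', C y = true ∧ C z = true
    letI τ : Fin n → ℕ := fun v => if v ∈ Y then 2 else 3
    (∀ C ∈ R', succF n G τ C = fun v => if v ∈ Y then C v else false) ∧
    (∀ C, ((Y.filter fun u => C u = true).card = 1 ∧
           (Yᶜ.filter fun u => C u = true).card = 1) → C ∉ R' →
        succF n G τ C = fun _ => false) := by
  set G : SimpleGraph (Fin n) := SimpleGraph.fromRel fun y z =>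
      ((y ∈ Y ∧ z ∉ Y) ∨ (z ∈ Y ∧ y ∉ Y)) ∧ ∃ C ∈ R', C y = true ∧ C z = true with hGdef
  set τ : Fin n → ℕ := (fun v => if v ∈ Y then 2 else 3) with hτdef
  have hAdj : ∀ a b, G.Adj a b ↔ a ≠ b ∧
      ((((a ∈ Y ∧ b ∉ Y) ∨ (b ∈ Y ∧ a ∉ Y)) ∧ ∃ C ∈ R', C a = true ∧ C b = true) ∨
       (((b ∈ Y ∧ a ∉ Y) ∨ (a ∈ Y ∧ b ∉ Y)) ∧ ∃ C ∈ R', C b = true ∧ C a = true)) :=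
    fun a b => Iff.rfl
  have hAdjYY : ∀ a b, a ∈ Y → b ∈ Y → ¬ G.Adj a b := by
    intro a b ha hb hadj
    rw [hAdj] at hadj
    rcases hadj.2 with ⟨h, -⟩ | ⟨h, -⟩ <;>
      rcases h with ⟨-, h⟩ | ⟨-, h⟩ <;> [exact h hb; exact h ha; exact h ha; exact h hb]
  constructor
  · intro C hC
    obtain ⟨h1, h2⟩ := hR' hC
    obtain ⟨y, z, hy, hz, hiff⟩ := config_struct Y C h1 h2
    have hne : y ≠ z := fun h => hz (h ▸ hy)
    funext v
    have hsub : (Finset.univ.filter fun u => (u = v ∨ G.Adj v u) ∧ C u = true)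
        ⊆ {y, z} := by
      intro u hu
      rw [Finset.mem_filter] at hu
      have := (hiff u).mp hu.2.2
      simpa using this
    rw [show succF n G τ C v = decide (τ v ≤ (Finset.univ.filter fun u => (u = v ∨ G.Adj v u) ∧ C u = true).card) by unfold succF; congr]
    by_cases hv : v ∈ Y
    · have hτ : τ v = 2 := if_pos hv
      rw [hτ, if_pos hv]
      by_cases hCv : C v = true
      · have hvy : v = y := by
          rcases (hiff v).mp hCv with h | h
          · exact h
          · exact absurd (h ▸ hv) hz
        rw [hCv]
        refine decide_eq_true ?_
        have hyf : y ∈ Finset.univ.filter fun u => (u = v ∨ G.Adj v u) ∧ C u = true :=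
          Finset.mem_filter.mpr
            ⟨Finset.mem_univ _, Or.inl hvy.symm, (hiff y).mpr (Or.inl rfl)⟩
        have hzf : z ∈ Finset.univ.filter fun u => (u = v ∨ G.Adj v u) ∧ C u = true := by
          refine Finset.mem_filter.mpr
            ⟨Finset.mem_univ _, Or.inr ?_, (hiff z).mpr (Or.inr rfl)⟩
          rw [hAdj]
          refine ⟨?_, Or.inl ⟨Or.inl ⟨hv, hz⟩, C, hC, hCv, (hiff z).mpr (Or.inr rfl)⟩⟩
          rw [hvy]; exact hne
        have hsub2 : ({y, z} : Finset (Fin n)) ⊆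
            Finset.univ.filter fun u => (u = v ∨ G.Adj v u) ∧ C u = true :=
          Finset.insert_subset hyf (Finset.singleton_subset_iff.mpr hzf)
        calc 2 = ({y, z} : Finset (Fin n)).card := (Finset.card_pair hne).symm
          _ ≤ _ := Finset.card_le_card hsub2
      · rw [Bool.not_eq_true] at hCv
        rw [hCv]
        refine decide_eq_false ?_
        intro hle
        have hsub3 : (Finset.univ.filter fun u => (u = v ∨ G.Adj v u) ∧ C u = true)
            ⊆ {z} := by
          intro u hu
          have hu' := hsub hu
          rw [Finset.mem_insert, Finset.mem_singleton] at hu'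
          rw [Finset.mem_filter] at hu
          rw [Finset.mem_singleton]
          rcases hu' with huy | huz
          · exfalso
            rcases hu.2.1 with h | h
            · have : C v = true := by rw [← h, huy]; exact (hiff y).mpr (Or.inl rfl)
              rw [hCv] at this; exact Bool.false_ne_true this
            · exact hAdjYY v u hv (huy ▸ hy) h
          · exact huz
        have := (Finset.card_le_card hsub3).trans_eq (Finset.card_singleton z)
        omega
    · have hτ : τ v = 3 := if_neg hv
      rw [hτ, if_neg hv]
      refine decide_eq_false ?_
      intro hle
      have := (Finset.card_le_card hsub).trans_eq (Finset.card_pair hne)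
      omega
  · intro C hCR hCnot
    obtain ⟨h1, h2⟩ := hCR
    obtain ⟨y, z, hy, hz, hiff⟩ := config_struct Y C h1 h2
    have hne : y ≠ z := fun h => hz (h ▸ hy)
    funext v
    have hsub : (Finset.univ.filter fun u => (u = v ∨ G.Adj v u) ∧ C u = true)
        ⊆ {y, z} := by
      intro u hu
      rw [Finset.mem_filter] at hu
      have := (hiff u).mp hu.2.2
      simpa using this
    rw [show succF n G τ C v = decide (τ v ≤ (Finset.univ.filter fun u => (u = v ∨ G.Adj v u) ∧ C u = true).card) by unfold succF; congr]
    refine decide_eq_false ?_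
    intro hle
    have hcard2 := (Finset.card_le_card hsub).trans_eq (Finset.card_pair hne)
    by_cases hv : v ∈ Y
    · have hτ : τ v = 2 := if_pos hv
      rw [hτ] at hle
      have heq : (Finset.univ.filter fun u => (u = v ∨ G.Adj v u) ∧ C u = true)
          = {y, z} :=
        Finset.eq_of_subset_of_card_le hsub (by rw [Finset.card_pair hne]; omega)
      have hyf : y ∈ Finset.univ.filter fun u => (u = v ∨ G.Adj v u) ∧ C u = true := by
        rw [heq]; exact Finset.mem_insert_self _ _
      have hzf : z ∈ Finset.univ.filter fun u => (u = v ∨ G.Adj v u) ∧ C u = true := by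
        rw [heq]; exact Finset.mem_insert_of_mem (Finset.mem_singleton_self z)
      rw [Finset.mem_filter] at hyf hzf
      have hvy : y = v := by
        rcases hyf.2.1 with h | h
        · exact h
        · exact absurd h (by intro h'; exact hAdjYY v y hv hy h')
      have hadj : G.Adj v z := by
        rcases hzf.2.1 with h | h
        · exact absurd hv (h ▸ hz)
        · exact h
      rw [hAdj] at hadj
      obtain ⟨C', hC', hC'1, hC'2⟩ : ∃ C' ∈ R', C' y = true ∧ C' z = true := by
        rcases hadj.2 with ⟨-, C', hC', ha, hb⟩ | ⟨-, C', hC', ha, hb⟩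
        · exact ⟨C', hC', hvy ▸ ha, hb⟩
        · exact ⟨C', hC', hvy ▸ hb, ha⟩
      obtain ⟨hm1, hm2⟩ := hR' hC'
      obtain ⟨y', z', hy', hz', hiff'⟩ := config_struct Y C' hm1 hm2
      have hyy : y = y' := by
        rcases (hiff' y).mp hC'1 with h | h
        · exact h
        · exact absurd (h ▸ hy) hz'
      have hzz : z = z' := by
        rcases (hiff' z).mp hC'2 with h | h
        · exact absurd (h ▸ hy') hz
        · exact h
      have : C = C' := by
        funext u
        rw [Bool.eq_iff_iff, hiff u, hiff' u, hyy, hzz]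
      exact hCnot (this ▸ hC')
    · have hτ : τ v = 3 := if_neg hv
      rw [hτ] at hle
      omega
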